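/- For all a, b ∈ ℝ and every Borel probability measure μ on ℝ, setting p₁₀ = ∫ Λ(a+c)(1−Λ(b+c)) dμ(c) and p₀₁ = ∫ (1−Λ(a+c))Λ(b+c) dμ(c), one has p₁₀ + p₀₁ > 0 and p₁₀/(p₁₀+p₀₁) = Λ(a−b). (This is the identity P((Y_s,Y_{s'})=(1,0) | Y_s+Y_{s'}=1, X=x) = Λ((x_s−x_{s'})'β₀) established in the proof of Lemma 1.) -/
import Mathlib


open MeasureTheory

/-- The standard logistic CDF `Λ(u) = exp u / (1 + exp u)`. -/
noncomputable def logisticCDF (u : ℝ) : ℝ := Real.exp u / (1 + Real.exp u)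

lemma logisticCDF_pos (u : ℝ) : 0 < logisticCDF u := by
  unfold logisticCDF
  positivity

lemma logisticCDF_lt_one (u : ℝ) : logisticCDF u < 1 := by
  unfold logisticCDF
  rw [div_lt_one (by positivity)]
  linarith

lemma continuous_logisticCDF : Continuous logisticCDF := by
  unfold logisticCDF
  exact Real.continuous_exp.div (by continuity) (fun x => by positivity)

/-- key pointwise identity -/
lemma key (a b c : ℝ) :
    logisticCDF (a + c) * (1 - logisticCDF (b + c)) =
      logisticCDF (a - b) *
        (logisticCDF (a + c) * (1 - logisticCDF (b + c)) +
          (1 - logisticCDF (a + c)) * logisticCDF (b + c)) := by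
  unfold logisticCDF
  have h1 : (0:ℝ) < 1 + Real.exp (a + c) := by positivity
  have h2 : (0:ℝ) < 1 + Real.exp (b + c) := by positivity
  have h3 : (0:ℝ) < 1 + Real.exp (a - b) := by positivity
  have he : Real.exp (a - b) * Real.exp (b + c) = Real.exp (a + c) := by
    rw [← Real.exp_add]; ring_nf
  field_simp
  nlinarith [Real.exp_pos (a+c), Real.exp_pos (b+c), Real.exp_pos (a-b),
    mul_pos (Real.exp_pos (a+c)) (Real.exp_pos (b+c))]

/-- For all `a b : ℝ` and every Borel probability measure `μ` on `ℝ`, setting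
`p₁₀ = ∫ Λ(a+c)(1−Λ(b+c)) dμ(c)` and `p₀₁ = ∫ (1−Λ(a+c))Λ(b+c) dμ(c)`, one has
`p₁₀ + p₀₁ > 0` and `p₁₀/(p₁₀+p₀₁) = Λ(a−b)`. -/
theorem stmt_1 (a b : ℝ) (μ : Measure ℝ) [IsProbabilityMeasure μ] :
    0 < (∫ c, logisticCDF (a + c) * (1 - logisticCDF (b + c)) ∂μ) +
        (∫ c, (1 - logisticCDF (a + c)) * logisticCDF (b + c) ∂μ) ∧
    (∫ c, logisticCDF (a + c) * (1 - logisticCDF (b + c)) ∂μ) /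
        ((∫ c, logisticCDF (a + c) * (1 - logisticCDF (b + c)) ∂μ) +
          (∫ c, (1 - logisticCDF (a + c)) * logisticCDF (b + c) ∂μ)) =
      logisticCDF (a - b) := by
  set f : ℝ → ℝ := fun c => logisticCDF (a + c) * (1 - logisticCDF (b + c)) with hf
  set g : ℝ → ℝ := fun c => (1 - logisticCDF (a + c)) * logisticCDF (b + c) with hg
  have hcf : Continuous f := by
    apply Continuous.mul
    · exact continuous_logisticCDF.comp (by continuity)
    · exact continuous_const.sub (continuous_logisticCDF.comp (by continuity))
  have hcg : Continuous g := by
    apply Continuous.mul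
    · exact continuous_const.sub (continuous_logisticCDF.comp (by continuity))
    · exact continuous_logisticCDF.comp (by continuity)
  have hfpos : ∀ c, 0 < f c := fun c =>
    mul_pos (logisticCDF_pos _) (by linarith [logisticCDF_lt_one (b + c)])
  have hgpos : ∀ c, 0 < g c := fun c =>
    mul_pos (by linarith [logisticCDF_lt_one (a + c)]) (logisticCDF_pos _)
  have hbf : ∀ c, ‖f c‖ ≤ 1 := by
    intro c
    rw [Real.norm_eq_abs, abs_of_pos (hfpos c)]
    simp only [hf]
    have := logisticCDF_pos (a + c)
    have := logisticCDF_lt_one (a + c)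
    have := logisticCDF_pos (b + c)
    have := logisticCDF_lt_one (b + c)
    nlinarith
  have hbg : ∀ c, ‖g c‖ ≤ 1 := by
    intro c
    rw [Real.norm_eq_abs, abs_of_pos (hgpos c)]
    simp only [hg]
    have := logisticCDF_pos (a + c)
    have := logisticCDF_lt_one (a + c)
    have := logisticCDF_pos (b + c)
    have := logisticCDF_lt_one (b + c)
    nlinarith
  have hif : Integrable f μ :=
    Integrable.mono' (integrable_const 1) hcf.aestronglyMeasurable
      (Filter.Eventually.of_forall hbf)
  have hig : Integrable g μ :=
    Integrable.mono' (integrable_const 1) hcg.aestronglyMeasurable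
      (Filter.Eventually.of_forall hbg)
  have hsum : (∫ c, f c ∂μ) + (∫ c, g c ∂μ) = ∫ c, f c + g c ∂μ :=
    (integral_add hif hig).symm
  have hSpos : 0 < (∫ c, f c ∂μ) + (∫ c, g c ∂μ) := by
    rw [hsum]
    apply (integral_pos_iff_support_of_nonneg
      (fun c => le_of_lt (add_pos (hfpos c) (hgpos c)))
      (hif.add hig)).2
    have : Function.support (fun c => f c + g c) = Set.univ := by
      ext c; simp only [Function.mem_support, Set.mem_univ, iff_true]
      exact ne_of_gt (add_pos (hfpos c) (hgpos c))
    rw [this]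
    simp
  have hkey : (∫ c, f c ∂μ) = logisticCDF (a - b) * ((∫ c, f c ∂μ) + (∫ c, g c ∂μ)) := by
    rw [hsum, ← integral_const_mul]
    exact integral_congr_ae (Filter.Eventually.of_forall (fun c => key a b c))
  refine ⟨hSpos, ?_⟩
  rw [div_eq_iff (ne_of_gt hSpos)]
  exact hkey
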